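/- In a matroid M on ground set E with an element x, the map C ↦ cl_M(C) is a bijection from the flats of the deletion M\x to the set of flats C of M satisfying C = cl_M(C\{x}), with inverse C ↦ C\{x}. -/

import Mathlib

open Matroid Set

variable {α : Type*}

/-- Deletion of a single element: restriction to `M.E \ {x}`. -/
def Matroid.deleteElem' (M : Matroid α) (x : α) : Matroid α := M ↾ (M.E \ {x})

/-- Contraction of a single element, defined by duality: `M/x = (M✶ \ x)✶`. -/
def Matroid.contractElem' (M : Matroid α) (x : α) : Matroid α := (M✶.deleteElem' x)✶

lemma my_closure_flat (M : Matroid α) (X : Set α) : M.IsFlat (M.closure X) := by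
  rw [closure_def, sInter_eq_iInter]
  haveI : Nonempty ↑{F | M.IsFlat F ∧ X ∩ M.E ⊆ F} :=
    ⟨⟨M.E, M.ground_isFlat, inter_subset_right⟩⟩
  exact IsFlat.iInter fun F ↦ F.2.1

lemma my_restrict_closure (M : Matroid α) {R X : Set α} (hR : R ⊆ M.E) (hX : X ⊆ R) :
    (M ↾ R).closure X = M.closure X ∩ R := by
  obtain ⟨I, hI⟩ := (M ↾ R).exists_isBasis X (by simpa using hX)
  have hI' : M.IsBasis I X := ((isBasis_restrict_iff hR).1 hI).1
  rw [← hI.closure_eq_closure, ← hI'.closure_eq_closure]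
  have hind : M.Indep I := hI'.indep
  have hindR : (M ↾ R).Indep I := hI.indep
  have hIR : I ⊆ R := hI'.subset.trans hX
  ext e
  simp only [mem_inter_iff]
  constructor
  · intro he
    have heR : e ∈ R := (M ↾ R).closure_subset_ground I he
    refine ⟨?_, heR⟩
    rw [hindR.mem_closure_iff] at he
    rw [hind.mem_closure_iff]
    rcases he with h | h
    · left
      rw [restrict_dep_iff] at h
      exact ⟨h.1, h.2.trans hR⟩
    · right; exact h
  · rintro ⟨he, heR⟩
    rw [hind.mem_closure_iff] at he
    rw [hindR.mem_closure_iff]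
    rcases he with h | h
    · left
      rw [restrict_dep_iff]
      exact ⟨h.1, insert_subset heR hIR⟩
    · right; exact h

/-- `C ↦ cl_M(C)` is a bijection from the flats of the deletion `M \ x` onto the flats
`C` of `M` with `C = cl_M(C \ {x})`, with inverse `C ↦ C \ {x}`. -/
theorem delete_flats_bijOn (M : Matroid α) (x : α) :
    Set.BijOn M.closure {F | (M.deleteElem' x).IsFlat F}
        {C | M.IsFlat C ∧ C = M.closure (C \ {x})} ∧
      (∀ F, (M.deleteElem' x).IsFlat F → M.closure F \ {x} = F) := by
  set R := M.E \ {x} with hR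
  have hRE : R ⊆ M.E := diff_subset
  have key : ∀ F, (M.deleteElem' x).IsFlat F → M.closure F \ {x} = F := by
    intro F hF
    have hFR : F ⊆ R := hF.subset_ground
    have hcl : (M ↾ R).closure F = F := hF.closure
    rw [my_restrict_closure M hRE hFR] at hcl
    conv_rhs => rw [← hcl]
    have hsub : M.closure F ⊆ M.E := M.closure_subset_ground F
    rw [hR]
    ext e
    simp only [mem_diff, mem_inter_iff, mem_singleton_iff]
    exact ⟨fun ⟨h1, h2⟩ ↦ ⟨h1, hsub h1, h2⟩, fun ⟨h1, _, h3⟩ ↦ ⟨h1, h3⟩⟩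
  refine ⟨⟨?_, ?_, ?_⟩, key⟩
  · intro F hF
    refine ⟨my_closure_flat M F, ?_⟩
    rw [key F hF]
  · intro F₁ h₁ F₂ h₂ he
    rw [← key F₁ h₁, ← key F₂ h₂, he]
  · rintro C ⟨hC, hCx⟩
    refine ⟨C \ {x}, ?_, hCx.symm⟩
    have hCR : C \ {x} ⊆ R := diff_subset_diff_left hC.subset_ground
    show (M ↾ R).IsFlat (C \ {x})
    have h1 : (M ↾ R).closure (C \ {x}) = M.closure (C \ {x}) ∩ R :=
      my_restrict_closure M hRE hCR
    rw [← hCx] at h1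
    have h2 : C ∩ R = C \ {x} := by
      rw [hR]
      ext e
      simp only [mem_inter_iff, mem_diff, mem_singleton_iff]
      exact ⟨fun ⟨h1, _, h3⟩ ↦ ⟨h1, h3⟩, fun ⟨h1, h3⟩ ↦ ⟨h1, hC.subset_ground h1, h3⟩⟩
    rw [h2] at h1
    have := my_closure_flat (M ↾ R) (C \ {x})
    rwa [h1] at this
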